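/- Let G be a finite simple undirected graph on n vertices without isolated vertices, c ∈ (0,1), and let R ∈ ℝ^n satisfy the graph-normalized PageRank equation. Let α > 0, ε ∈ (0,1), k > 0, and let i be a vertex such that the number of neighbors j of i with d_j < α is at least ε·d_i, and such that d_i > α·k/(ε·c·(1−c)). Then R_i > k. -/

import Mathlib

open Finset

/-- If at least `ε·d i` neighbors `j` of the vertex `i` have degree `d j < α`, and
`d i > α·k/(ε·c·(1-c))`, then the PageRank of `i` exceeds `k`. -/
theorem pagerank_exceeds_of_many_small_neighbors
    {n : ℕ} (A : Fin n → Fin n → ℝ)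
    (hA01 : ∀ i j, A i j = 0 ∨ A i j = 1)
    (hAsymm : ∀ i j, A i j = A j i)
    (hAdiag : ∀ i, A i i = 0)
    (d : Fin n → ℝ) (hd : ∀ i, d i = ∑ j, A i j)
    (hd1 : ∀ i, 1 ≤ d i)
    (c : ℝ) (hc0 : 0 < c) (hc1 : c < 1)
    (R : Fin n → ℝ)
    (hR : ∀ k, R k = c * ∑ j, (A j k / d j) * R j + (1 - c))
    (α ε k : ℝ) (hα : 0 < α) (hε0 : 0 < ε) (hε1 : ε < 1) (hk : 0 < k)
    (i : Fin n)
    (hsmall : ε * d i ≤ ((univ.filter (fun j => A i j = 1 ∧ d j < α)).card : ℝ))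
    (hdeg : α * k / (ε * c * (1 - c)) < d i) :
    k < R i := by
  have hApos : ∀ a b, (0:ℝ) ≤ A a b := by
    intro a b; rcases hA01 a b with h | h <;> simp [h]
  have hdpos : ∀ j, (0:ℝ) < d j := fun j => lt_of_lt_of_le one_pos (hd1 j)
  have hcol : ∀ k0, (∑ j, A j k0) = d k0 := by
    intro k0
    rw [hd k0]
    exact Finset.sum_congr rfl fun j _ => hAsymm j k0
  -- minimizer of R j / d j
  obtain ⟨j0, -, hj0⟩ := Finset.exists_min_image (univ : Finset (Fin n))
    (fun j => R j / d j) ⟨i, mem_univ i⟩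
  set m := R j0 / d j0 with hm
  have hmin : ∀ j, m ≤ R j / d j := fun j => hj0 j (mem_univ j)
  have hRj : ∀ j, d j * m ≤ R j := by
    intro j
    have h1 := hmin j
    have h2 := hdpos j
    calc d j * m ≤ d j * (R j / d j) := mul_le_mul_of_nonneg_left h1 h2.le
      _ = R j := by field_simp
  -- key lower bound on sums
  have hsum : ∀ k0, d k0 * m ≤ ∑ j, (A j k0 / d j) * R j := by
    intro k0
    calc d k0 * m = (∑ j, A j k0) * m := by rw [hcol]
      _ = ∑ j, A j k0 * m := by rw [Finset.sum_mul]
      _ ≤ ∑ j, (A j k0 / d j) * R j := by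
          apply Finset.sum_le_sum
          intro j _
          have hdj := hdpos j
          have heq : A j k0 * m = (A j k0 / d j) * (d j * m) := by
            field_simp
          rw [heq]
          exact mul_le_mul_of_nonneg_left (hRj j)
            (div_nonneg (hApos j k0) hdj.le)
  -- m > 0
  have hmpos : 0 < m := by
    have h1 := hR j0
    have h2 := hsum j0
    have h3 : R j0 = d j0 * m := by
      have := (hdpos j0).ne'
      rw [hm]; field_simp
    have h4 : c * (d j0 * m) + (1 - c) ≤ d j0 * m := by
      rw [← h3]
      nlinarith [mul_le_mul_of_nonneg_left h2 hc0.le]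
    have h5 : 1 ≤ d j0 * m := by nlinarith
    nlinarith [hdpos j0]
  have hRpos : ∀ j, 0 < R j := fun j =>
    lt_of_lt_of_le (mul_pos (hdpos j) hmpos) (hRj j)
  -- R j ≥ 1 - c
  have hRlb : ∀ j, 1 - c ≤ R j := by
    intro j
    have h1 := hR j
    have h2 : (0:ℝ) ≤ ∑ j', (A j' j / d j') * R j' := by
      apply Finset.sum_nonneg
      intro j' _
      exact mul_nonneg (div_nonneg (hApos j' j) (hdpos j').le) (hRpos j').le
    nlinarith
  -- the set of small-degree neighbors
  set S := univ.filter (fun j => A i j = 1 ∧ d j < α) with hS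
  set T := ∑ j, (A j i / d j) * R j with hT
  have hsumS : (S.card : ℝ) * ((1 - c) / α) ≤ T := by
    have hsub : ∑ j ∈ S, (A j i / d j) * R j ≤ T := by
      apply Finset.sum_le_sum_of_subset_of_nonneg (Finset.subset_univ S)
      intro j _ _
      exact mul_nonneg (div_nonneg (hApos j i) (hdpos j).le) (hRpos j).le
    have hterm : ∀ j ∈ S, (1 - c) / α ≤ (A j i / d j) * R j := by
      intro j hj
      rw [hS, Finset.mem_filter] at hj
      obtain ⟨-, hA1, hdα⟩ := hj
      have hAji : A j i = 1 := by rw [hAsymm j i]; exact hA1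
      have hdj := hdpos j
      calc (1 - c) / α ≤ (1 - c) / d j := by
            apply div_le_div_of_nonneg_left (by linarith) hdj hdα.le
        _ ≤ R j / d j := by
            gcongr
            exact hRlb j
        _ = (A j i / d j) * R j := by rw [hAji]; ring
    calc (S.card : ℝ) * ((1 - c) / α) ≤ ∑ j ∈ S, (A j i / d j) * R j := by
          have := Finset.card_nsmul_le_sum S (fun j => (A j i / d j) * R j)
            ((1 - c) / α) hterm
          simpa [nsmul_eq_mul] using this
      _ ≤ T := hsub
  have hεlb : ε * d i * ((1 - c) / α) ≤ T :=
    le_trans (mul_le_mul_of_nonneg_right hsmall (div_nonneg (by linarith) hα.le)) hsumS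
  -- from hdeg
  have h6 : α * k < ε * c * (1 - c) * d i := by
    have hpos : (0:ℝ) < ε * c * (1 - c) := mul_pos (mul_pos hε0 hc0) (by linarith)
    calc α * k = α * k / (ε * c * (1 - c)) * (ε * c * (1 - c)) := by
          field_simp
          exact (div_self (by linarith)).symm
      _ < d i * (ε * c * (1 - c)) := by
          exact mul_lt_mul_of_pos_right hdeg hpos
      _ = ε * c * (1 - c) * d i := by ring
  have h7 : α * (c * T) ≥ ε * c * (1 - c) * d i := by
    have := mul_le_mul_of_nonneg_left hεlb (by positivity : (0:ℝ) ≤ α * c)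
    calc ε * c * (1 - c) * d i = α * c * (ε * d i * ((1 - c) / α)) := by
          field_simp
      _ ≤ α * c * T := this
      _ = α * (c * T) := by ring
  have h8 : k < c * T := by
    have : α * k < α * (c * T) := lt_of_lt_of_le h6 h7
    exact lt_of_mul_lt_mul_left this hα.le
  have h9 := hR i
  rw [← hT] at h9
  linarith
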